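/- For every ξ ∈ ℝ, (1/(π i)) p.v. ∫_ℝ (e^{-iξ} − e^{-iη})(e^{iξ} − e^{iη})/(ξ − η)² · e^{-iη} dη = 0. -/

import Mathlib

open Complex Filter Topology MeasureTheory


noncomputable def Kfun (t : ℝ) : ℝ := (2 - 2*Real.cos t)/t^2 * Real.cos t
noncomputable def Sfun (t : ℝ) : ℝ := (2 - 2*Real.cos t)/t^2 * Real.sin t
noncomputable def Ffun (t : ℝ) : ℝ := (1 - Real.cos t)/t^2

lemma num_bd (t : ℝ) : |(2 - 2*Real.cos t)/t^2| ≤ 1 := by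
  rcases eq_or_ne t 0 with h | h
  · simp [h]
  · have h1 : 1 - t^2/2 ≤ Real.cos t := Real.one_sub_sq_div_two_le_cos
    have h2 : Real.cos t ≤ 1 := Real.cos_le_one t
    have ht : (0:ℝ) < t^2 := by positivity
    rw [abs_div, _root_.abs_of_nonneg (by linarith : (0:ℝ) ≤ 2 - 2*Real.cos t),
      _root_.abs_of_nonneg ht.le, div_le_one ht]
    linarith

lemma intable_of_bounded {f : ℝ → ℝ} (hf : Measurable f) {C : ℝ} (h : ∀ t, |f t| ≤ C)
    (a b : ℝ) : IntervalIntegrable f volume a b := by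
  refine (intervalIntegrable_const (c := C)).mono_fun hf.aestronglyMeasurable ?_
  filter_upwards with t
  calc ‖f t‖ = |f t| := rfl
    _ ≤ C := h t
    _ ≤ ‖C‖ := le_abs_self C

lemma meas_num : Measurable fun t : ℝ => (2 - 2*Real.cos t)/t^2 :=
  (measurable_const.sub (Real.measurable_cos.const_mul 2)).div (measurable_id.pow measurable_const)

lemma K_int (a b : ℝ) : IntervalIntegrable Kfun volume a b := by
  refine intable_of_bounded (meas_num.mul Real.measurable_cos) (C := 1) (fun t => ?_) a b
  show |(2 - 2*Real.cos t)/t^2 * Real.cos t| ≤ 1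
  rw [abs_mul]
  calc |(2 - 2*Real.cos t)/t^2| * |Real.cos t| ≤ 1 * 1 :=
        mul_le_mul (num_bd t) (Real.abs_cos_le_one t) (abs_nonneg _) zero_le_one
    _ = 1 := one_mul 1

lemma S_int (a b : ℝ) : IntervalIntegrable Sfun volume a b := by
  refine intable_of_bounded (meas_num.mul Real.measurable_sin) (C := 1) (fun t => ?_) a b
  show |(2 - 2*Real.cos t)/t^2 * Real.sin t| ≤ 1
  rw [abs_mul]
  calc |(2 - 2*Real.cos t)/t^2| * |Real.sin t| ≤ 1 * 1 :=
        mul_le_mul (num_bd t) (Real.abs_sin_le_one t) (abs_nonneg _) zero_le_one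
    _ = 1 := one_mul 1

lemma F_int (a b : ℝ) : IntervalIntegrable Ffun volume a b := by
  refine intable_of_bounded ((measurable_const.sub Real.measurable_cos).div
    (measurable_id.pow measurable_const)) (C := 1) (fun t => ?_) a b
  show |(1 - Real.cos t)/t^2| ≤ 1
  calc |(1 - Real.cos t)/t^2| = |(2 - 2*Real.cos t)/t^2|/2 := by
        rw [abs_div, abs_div, show (2 - 2*Real.cos t) = 2*(1-Real.cos t) from by ring,
          abs_mul, show |(2:ℝ)| = 2 from abs_two]
        ring
    _ ≤ 1 := by linarith [num_bd t]

lemma Sfun_odd (t : ℝ) : Sfun (-t) = - Sfun t := by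
  unfold Sfun
  rw [Real.cos_neg, Real.sin_neg, neg_sq]
  ring

lemma S_integral_zero (R : ℝ) : ∫ t in (-R)..R, Sfun t = 0 := by
  have h1 : ∫ t in (-R)..(0:ℝ), Sfun t = - ∫ t in (0:ℝ)..R, Sfun t := by
    have := intervalIntegral.integral_comp_neg (a := (0:ℝ)) (b := R) Sfun
    rw [neg_zero] at this
    rw [← this]
    simp only [Sfun_odd]
    rw [intervalIntegral.integral_neg]
  rw [← intervalIntegral.integral_add_adjacent_intervals (b := (0:ℝ)) (S_int _ _) (S_int _ _),
    h1, neg_add_cancel]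

lemma key_id (t : ℝ) : Kfun t = (1 - Real.cos (2*t))/t^2 - 2 * Ffun t := by
  unfold Kfun Ffun
  rw [Real.cos_two_mul, div_mul_eq_mul_div, ← mul_div_assoc, div_sub_div_same]
  congr 1
  ring

lemma G2_eq (t : ℝ) : (1 - Real.cos (2*t))/t^2 = 4 * Ffun (2*t) := by
  unfold Ffun
  rcases eq_or_ne t 0 with h | h
  · simp [h]
  · field_simp
    ring

lemma G2_int (a b : ℝ) : IntervalIntegrable (fun t => (1 - Real.cos (2*t))/t^2) volume a b := by
  refine intable_of_bounded ((measurable_const.sub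
    (Real.measurable_cos.comp (measurable_id.const_mul 2))).div
    (measurable_id.pow measurable_const)) (C := 2) (fun t => ?_) a b
  show |(1 - Real.cos (2*t))/t^2| ≤ 2
  rcases eq_or_ne t 0 with h | h
  · simp [h]
  · have h1 : 1 - (2*t)^2/2 ≤ Real.cos (2*t) := Real.one_sub_sq_div_two_le_cos
    have h2 : Real.cos (2*t) ≤ 1 := Real.cos_le_one _
    have ht : (0:ℝ) < t^2 := by positivity
    rw [abs_div, _root_.abs_of_nonneg (by linarith : (0:ℝ) ≤ 1 - Real.cos (2*t)),
      _root_.abs_of_nonneg ht.le, div_le_iff₀ ht]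
    nlinarith

lemma G2_integral (R : ℝ) :
    ∫ t in (-R)..R, (1 - Real.cos (2*t))/t^2 = 2 * ∫ u in (-(2*R))..(2*R), Ffun u := by
  simp only [G2_eq]
  rw [intervalIntegral.integral_const_mul,
    intervalIntegral.integral_comp_mul_left (fun u => Ffun u) (two_ne_zero), smul_eq_mul,
    show (2:ℝ)*(-R) = -(2*R) from by ring]
  ring

lemma E_eq (R : ℝ) : ∫ t in (-R)..R, Kfun t
    = 2*((∫ u in (-(2*R))..(-R), Ffun u) + ∫ u in R..(2*R), Ffun u) := by
  have h1 := intervalIntegral.integral_add_adjacent_intervals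
    (F_int (-(2*R)) (-R)) (F_int (-R) R)
  have h2 := intervalIntegral.integral_add_adjacent_intervals
    (F_int (-(2*R)) R) (F_int R (2*R))
  calc ∫ t in (-R)..R, Kfun t
      = ∫ t in (-R)..R, ((1 - Real.cos (2*t))/t^2 - 2 * Ffun t) := by simp only [key_id]
    _ = (∫ t in (-R)..R, (1 - Real.cos (2*t))/t^2) - ∫ t in (-R)..R, 2 * Ffun t :=
        intervalIntegral.integral_sub (G2_int _ _) ((F_int _ _).const_mul 2)
    _ = 2 * (∫ u in (-(2*R))..(2*R), Ffun u) - 2 * ∫ t in (-R)..R, Ffun t := by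
        rw [G2_integral, intervalIntegral.integral_const_mul]
    _ = 2*((∫ u in (-(2*R))..(-R), Ffun u) + ∫ u in R..(2*R), Ffun u) := by linarith

lemma E_bound (R : ℝ) (hR : 0 < R) : |∫ t in (-R)..R, Kfun t| ≤ 8/R := by
  have Fb : ∀ u : ℝ, R^2 ≤ u^2 → ‖Ffun u‖ ≤ 2/R^2 := by
    intro u hu
    have hc : Real.cos u ≤ 1 := Real.cos_le_one u
    have hc2 : -1 ≤ Real.cos u := Real.neg_one_le_cos u
    have hR2 : (0:ℝ) < R^2 := by positivity
    have hu2 : (0:ℝ) < u^2 := lt_of_lt_of_le hR2 hu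
    rw [Real.norm_eq_abs, Ffun.eq_def,
      _root_.abs_of_nonneg (div_nonneg (by linarith) hu2.le)]
    calc (1 - Real.cos u)/u^2 ≤ 2/u^2 := by gcongr <;> linarith
      _ ≤ 2/R^2 := by gcongr
  have hb1 : ‖∫ u in R..(2*R), Ffun u‖ ≤ 2/R := by
    have h := intervalIntegral.norm_integral_le_of_norm_le_const
      (C := 2/R^2) (f := Ffun) (a := R) (b := 2*R) ?_
    · calc ‖∫ u in R..(2*R), Ffun u‖ ≤ 2/R^2 * |2*R - R| := h
        _ = 2/R := by
          rw [show (2*R - R) = R from by ring, _root_.abs_of_pos hR]; field_simp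
    · intro u hu
      rw [Set.uIoc_of_le (by linarith)] at hu
      exact Fb u (by nlinarith [hu.1, hu.2])
  have hb2 : ‖∫ u in (-(2*R))..(-R), Ffun u‖ ≤ 2/R := by
    have h := intervalIntegral.norm_integral_le_of_norm_le_const
      (C := 2/R^2) (f := Ffun) (a := -(2*R)) (b := -R) ?_
    · calc ‖∫ u in (-(2*R))..(-R), Ffun u‖ ≤ 2/R^2 * |-R - -(2*R)| := h
        _ = 2/R := by
          rw [show (-R - -(2*R)) = R from by ring, _root_.abs_of_pos hR]; field_simp
    · intro u hu
      rw [Set.uIoc_of_le (by linarith)] at hu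
      exact Fb u (by nlinarith [hu.1, hu.2])
  rw [E_eq]
  rw [Real.norm_eq_abs] at hb1 hb2
  calc |2*((∫ u in (-(2*R))..(-R), Ffun u) + ∫ u in R..(2*R), Ffun u)|
      ≤ 2*(|∫ u in (-(2*R))..(-R), Ffun u| + |∫ u in R..(2*R), Ffun u|) := by
        rw [abs_mul, show |(2:ℝ)| = 2 from abs_two]
        gcongr
        exact abs_add_le _ _
    _ ≤ 2*(2/R + 2/R) := by gcongr
    _ = 8/R := by ring

noncomputable def fC (ξ t : ℝ) : ℂ :=
  (((2 - 2*Real.cos t)/t^2 : ℝ) : ℂ) * Complex.exp (-Complex.I*((t:ℂ) + (ξ:ℂ)))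

lemma exp_negI (t : ℝ) :
    Complex.exp (-Complex.I*(t:ℂ)) = ↑(Real.cos t) - ↑(Real.sin t)*Complex.I := by
  rw [show (-Complex.I*(t:ℂ)) = ((-t:ℝ):ℂ) * Complex.I from by push_cast; ring,
    Complex.exp_mul_I, ← Complex.ofReal_cos, ← Complex.ofReal_sin, Real.cos_neg, Real.sin_neg]
  push_cast
  ring

lemma expand_prod (a b : ℂ) :
    (Complex.exp (-a) - Complex.exp (-b)) * (Complex.exp a - Complex.exp b)
      = 2 - Complex.exp (b - a) - Complex.exp (a - b) := by
  rw [sub_mul, mul_sub, mul_sub, ← Complex.exp_add, ← Complex.exp_add, ← Complex.exp_add,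
    ← Complex.exp_add]
  simp only [neg_add_cancel, Complex.exp_zero, neg_add_eq_sub]
  ring

lemma integrand_eq (ξ η : ℝ) :
    (Complex.exp (-Complex.I * ξ) - Complex.exp (-Complex.I * η)) *
        (Complex.exp (Complex.I * ξ) - Complex.exp (Complex.I * η)) /
          ((ξ : ℂ) - (η : ℂ)) ^ 2 *
        Complex.exp (-Complex.I * η) = fC ξ (η - ξ) := by
  have hnum : (Complex.exp (-Complex.I * ξ) - Complex.exp (-Complex.I * η)) *
      (Complex.exp (Complex.I * ξ) - Complex.exp (Complex.I * η))
      = ((2 - 2*Real.cos (η - ξ) : ℝ) : ℂ) := by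
    have h := expand_prod (Complex.I * ξ) (Complex.I * η)
    simp only [neg_mul] at h ⊢
    rw [h, show (Complex.I*↑η - Complex.I*↑ξ) = Complex.I * ((η - ξ : ℝ):ℂ) from by
        push_cast; ring,
      show (Complex.I*↑ξ - Complex.I*↑η) = -(Complex.I * ((η - ξ : ℝ):ℂ)) from by
        push_cast; ring]
    rw [mul_comm Complex.I, ← neg_mul, Complex.exp_mul_I, Complex.exp_mul_I,
      Complex.cos_neg, Complex.sin_neg, ← Complex.ofReal_cos, ← Complex.ofReal_sin]
    push_cast
    ring
  rw [hnum, fC]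
  have hden : ((ξ:ℂ) - (η:ℂ))^2 = (((η - ξ:ℝ):ℂ))^2 := by push_cast; ring
  have hexp : Complex.exp (-Complex.I*(η:ℂ))
      = Complex.exp (-Complex.I*(((η - ξ:ℝ):ℂ) + (ξ:ℂ))) := by
    congr 1
    push_cast
    ring
  rw [hden, hexp]
  push_cast
  ring

lemma fC_split (ξ t : ℝ) :
    fC ξ t = Complex.exp (-Complex.I*(ξ:ℂ)) * (((Kfun t : ℝ) : ℂ) - ((Sfun t : ℝ) : ℂ)*Complex.I) := by
  rw [fC, show (-Complex.I*((t:ℂ) + (ξ:ℂ))) = (-Complex.I*(ξ:ℂ)) + (-Complex.I*(t:ℂ)) from by ring,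
    Complex.exp_add]
  simp only [exp_negI]
  unfold Kfun Sfun
  push_cast
  ring

/-- Vanishing of the resonant term in Case II of the localization lemma:
`(1/(πi)) p.v.∫ (e^{-iξ} − e^{-iη})(e^{iξ} − e^{iη})/(ξ − η)² · e^{-iη} dη = 0`,
with the principal value at infinity realized as a limit over `|ξ − η| < R`. -/
theorem stmt7 (ξ : ℝ) :
    Tendsto (fun R : ℝ =>
        (1 / ((Real.pi : ℂ) * Complex.I)) *
          ∫ η in {η : ℝ | |ξ - η| < R},
            (Complex.exp (-Complex.I * ξ) - Complex.exp (-Complex.I * η)) *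
              (Complex.exp (Complex.I * ξ) - Complex.exp (Complex.I * η)) /
                ((ξ : ℂ) - (η : ℂ)) ^ 2 *
              Complex.exp (-Complex.I * η))
      atTop (𝓝 0) := by
  have key : ∀ R : ℝ, 0 < R →
      (1 / ((Real.pi : ℂ) * Complex.I)) *
          ∫ η in {η : ℝ | |ξ - η| < R},
            (Complex.exp (-Complex.I * ξ) - Complex.exp (-Complex.I * η)) *
              (Complex.exp (Complex.I * ξ) - Complex.exp (Complex.I * η)) /
                ((ξ : ℂ) - (η : ℂ)) ^ 2 *
              Complex.exp (-Complex.I * η)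
        = (1 / ((Real.pi : ℂ) * Complex.I)) *
            (Complex.exp (-Complex.I*(ξ:ℂ)) * ((∫ t in (-R)..R, Kfun t : ℝ) : ℂ)) := by
    intro R hR
    have hset : {η : ℝ | |ξ - η| < R} = Set.Ioo (ξ - R) (ξ + R) := by
      ext η
      rw [Set.mem_setOf_eq, Set.mem_Ioo, abs_sub_lt_iff]
      constructor
      · rintro ⟨h1, h2⟩; constructor <;> linarith
      · rintro ⟨h1, h2⟩; constructor <;> linarith
    congr 1
    calc (∫ η in {η : ℝ | |ξ - η| < R},
            (Complex.exp (-Complex.I * ξ) - Complex.exp (-Complex.I * η)) *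
              (Complex.exp (Complex.I * ξ) - Complex.exp (Complex.I * η)) /
                ((ξ : ℂ) - (η : ℂ)) ^ 2 *
              Complex.exp (-Complex.I * η))
        = ∫ η in (ξ - R)..(ξ + R),
            (Complex.exp (-Complex.I * ξ) - Complex.exp (-Complex.I * η)) *
              (Complex.exp (Complex.I * ξ) - Complex.exp (Complex.I * η)) /
                ((ξ : ℂ) - (η : ℂ)) ^ 2 *
              Complex.exp (-Complex.I * η) := by
          rw [hset, ← MeasureTheory.integral_Ioc_eq_integral_Ioo,
            ← intervalIntegral.integral_of_le (by linarith)]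
      _ = ∫ η in (ξ - R)..(ξ + R), fC ξ (η - ξ) := by
          simp only [integrand_eq]
      _ = ∫ t in (-R)..R, fC ξ t := by
          rw [intervalIntegral.integral_comp_sub_right (fun t => fC ξ t) ξ]
          congr 1 <;> ring
      _ = Complex.exp (-Complex.I*(ξ:ℂ)) *
            ∫ t in (-R)..R, (((Kfun t : ℝ) : ℂ) - ((Sfun t : ℝ) : ℂ)*Complex.I) := by
          simp only [fC_split]
          rw [intervalIntegral.integral_const_mul]
      _ = Complex.exp (-Complex.I*(ξ:ℂ)) * ((∫ t in (-R)..R, Kfun t : ℝ) : ℂ) := by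
          congr 1
          have hKc : IntervalIntegrable (fun t => ((Kfun t : ℝ) : ℂ)) volume (-R) R :=
            ⟨(K_int (-R) R).1.ofReal, (K_int (-R) R).2.ofReal⟩
          have hSc : IntervalIntegrable (fun t => ((Sfun t : ℝ) : ℂ)*Complex.I) volume (-R) R :=
            IntervalIntegrable.mul_const ⟨(S_int (-R) R).1.ofReal, (S_int (-R) R).2.ofReal⟩ _
          rw [intervalIntegral.integral_sub hKc hSc, intervalIntegral.integral_mul_const,
            intervalIntegral.integral_ofReal, intervalIntegral.integral_ofReal,
            S_integral_zero]
          simp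
  have hE : Tendsto (fun R : ℝ => ∫ t in (-R)..R, Kfun t) atTop (𝓝 0) := by
    refine squeeze_zero_norm' (a := fun R : ℝ => 8/R) ?_
      (tendsto_const_nhds.div_atTop tendsto_id)
    filter_upwards [eventually_gt_atTop 0] with R hR
    exact E_bound R hR
  have hC : Tendsto (fun R : ℝ => (1 / ((Real.pi : ℂ) * Complex.I)) *
      (Complex.exp (-Complex.I*(ξ:ℂ)) * ((∫ t in (-R)..R, Kfun t : ℝ) : ℂ)))
      atTop (𝓝 0) := by
    have h1 : Tendsto (fun R : ℝ => (((∫ t in (-R)..R, Kfun t : ℝ)) : ℂ)) atTop (𝓝 0) := by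
      have := (Complex.continuous_ofReal.tendsto 0).comp hE
      simpa [Function.comp_def] using this
    have h2 := (h1.const_mul (Complex.exp (-Complex.I*(ξ:ℂ)))).const_mul
      (1 / ((Real.pi : ℂ) * Complex.I))
    simpa using h2
  refine hC.congr' ?_
  filter_upwards [eventually_gt_atTop 0] with R hR
  exact (key R hR).symm
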